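/- arXiv:0906.1441 — 2 statements merged into one kernel-verified Lean document; each statement's English description precedes it below -/
import Mathlib

section
/- Let ι be a finitely generated abelian group, A a noetherian commutative ring graded by ι, and 𝔭 a prime ideal of A. Then 𝔭 is an associated prime of the A-module A⧸I for some homogeneous ideal I of A if and only if 𝔭 is a minimal prime over its homogeneous core 𝔭*. -/
open DirectSum


lemma aux_minimalPrimes_mem_associatedPrimes {R : Type*} [CommRing R] [IsNoetherianRing R]
    {I p : Ideal R} (hp : p ∈ I.minimalPrimes) : p ∈ associatedPrimes R (R ⧸ I) := by
  classical
  obtain ⟨⟨hprime, hIp⟩, hmin⟩ := hp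
  have hone : (1 : R) ∉ p := fun h => hprime.ne_top ((Ideal.eq_top_iff_one p).mpr h)
  -- Step a
  have step_a : ∀ x ∈ p, ∃ (n : ℕ) (s : R), s ∉ p ∧ s * x ^ n ∈ I := by
    intro x hx
    by_contra hcon
    push_neg at hcon
    let M : Submonoid R :=
      { carrier := {r | ∃ (n : ℕ) (s : R), s ∉ p ∧ s * x ^ n = r}
        one_mem' := ⟨0, 1, hone, by ring⟩
        mul_mem' := by
          rintro r1 r2 ⟨n1, s1, hs1, rfl⟩ ⟨n2, s2, hs2, rfl⟩
          refine ⟨n1 + n2, s1 * s2, fun h => ?_, by ring⟩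
          rcases hprime.mem_or_mem h with h | h
          exacts [hs1 h, hs2 h] }
    have hdisj : Disjoint (I : Set R) (M : Set R) := by
      rw [Set.disjoint_left]
      rintro r hrI ⟨n, s, hs, rfl⟩
      exact hcon n s hs hrI
    obtain ⟨q, hq, hIq, hqdisj⟩ := Ideal.exists_le_prime_disjoint I M hdisj
    have hqp : q ≤ p := by
      intro y hy
      by_contra hyp
      exact Set.disjoint_left.mp hqdisj hy ⟨0, y, hyp, by ring⟩
    have hpq : p ≤ q := hmin ⟨hq, hIq⟩ hqp
    exact Set.disjoint_left.mp hqdisj (hpq hx) ⟨1, 1, hone, by ring⟩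
  -- saturation ideal
  let Isat : Ideal R :=
    { carrier := {r | ∃ s, s ∉ p ∧ s * r ∈ I}
      zero_mem' := ⟨1, hone, by simpa using I.zero_mem⟩
      add_mem' := by
        rintro r1 r2 ⟨s1, hs1, h1⟩ ⟨s2, hs2, h2⟩
        refine ⟨s1 * s2, fun h => ?_, ?_⟩
        · rcases hprime.mem_or_mem h with h | h
          exacts [hs1 h, hs2 h]
        · have : s1 * s2 * (r1 + r2) = s2 * (s1 * r1) + s1 * (s2 * r2) := by ring
          rw [this]
          exact I.add_mem (I.mul_mem_left _ h1) (I.mul_mem_left _ h2)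
      smul_mem' := by
        rintro a r ⟨s, hs, h⟩
        refine ⟨s, hs, ?_⟩
        have : s * (a • r) = a * (s * r) := by simp [smul_eq_mul]; ring
        rw [this]
        exact I.mul_mem_left _ h }
    -- helper: f.g. ideal inside "pointwise Isat" has common denominator
  have lemC : ∀ (J : Ideal R), (∀ y ∈ J, ∃ s, s ∉ p ∧ s * y ∈ I) →
      ∃ s, s ∉ p ∧ ∀ y ∈ J, s * y ∈ I := by
    intro J hJ
    obtain ⟨T, hT⟩ := IsNoetherian.noetherian J
    have hJ' : ∀ y : R, ∃ s, s ∉ p ∧ (y ∈ J → s * y ∈ I) := by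
      intro y
      by_cases hy : y ∈ J
      · obtain ⟨s, hs, h⟩ := hJ y hy
        exact ⟨s, hs, fun _ => h⟩
      · exact ⟨1, hone, fun h => absurd h hy⟩
    choose f hf1 hf2 using hJ'
    refine ⟨∏ t ∈ T, f t, ?_, ?_⟩
    · exact Submonoid.prod_mem p.primeCompl (fun t _ => hf1 t)
    · intro y hy
      rw [← hT] at hy
      induction hy using Submodule.span_induction with
      | mem z hz =>
        have hzT : z ∈ T := hz
        have hzJ : z ∈ J := hT ▸ Ideal.subset_span hz
        have heq : (∏ t ∈ T, f t) * z = (∏ t ∈ T.erase z, f t) * (f z * z) := by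
          rw [← Finset.mul_prod_erase T f hzT]; ring
        rw [heq]
        exact I.mul_mem_left _ (hf2 z hzJ)
      | zero => simpa using I.zero_mem
      | add a b ha hb iha ihb => rw [mul_add]; exact I.add_mem iha ihb
      | smul a z hz ih =>
        rw [smul_eq_mul]
        have heq : (∏ t ∈ T, f t) * (a * z) = a * ((∏ t ∈ T, f t) * z) := by ring
        rw [heq]
        exact I.mul_mem_left _ ih
  have hrad : p ≤ Isat.radical := by
    intro x hx
    obtain ⟨n, s, hs, h⟩ := step_a x hx
    exact ⟨n, s, hs, h⟩
  obtain ⟨n0, hn0⟩ := Ideal.exists_pow_le_of_le_radical_of_fg hrad (IsNoetherian.noetherian p)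
  have hP0 : ∃ n : ℕ, ∃ s, s ∉ p ∧ ∀ y ∈ p ^ n, s * y ∈ I := by
    obtain ⟨s, hs, h⟩ := lemC (p ^ n0) (fun y hy => hn0 hy)
    exact ⟨n0, s, hs, h⟩
  let n1 := Nat.find hP0
  obtain ⟨s, hs, hsI⟩ := Nat.find_spec hP0
  have hn1pos : 0 < n1 := by
    rcases Nat.eq_zero_or_pos n1 with h | h
    · exfalso
      obtain ⟨s', hs', hs'I⟩ : ∃ s', s' ∉ p ∧ ∀ y ∈ p ^ (0:ℕ), s' * y ∈ I := h ▸ Nat.find_spec hP0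
      have : s' * 1 ∈ I := hs'I 1 (by simp)
      rw [mul_one] at this
      exact hs' (hIp this)
    · exact h
  have hnotmin : ¬ ∃ s, s ∉ p ∧ ∀ y ∈ p ^ (n1 - 1), s * y ∈ I := by
    have := Nat.find_min hP0 (m := n1 - 1) (by omega)
    push_neg at this ⊢
    exact this
  have hex : ∃ z ∈ p ^ (n1 - 1), s * z ∉ Isat := by
    by_contra hcon
    push_neg at hcon
    obtain ⟨u, hu, huI⟩ := lemC (p ^ (n1 - 1)) (fun y hy => by
      obtain ⟨t, ht, htI⟩ := hcon y hy
      refine ⟨t * s, fun h => ?_, by rw [mul_assoc]; exact htI⟩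
      rcases hprime.mem_or_mem h with h | h
      exacts [ht h, hs h])
    exact hnotmin ⟨u, hu, huI⟩
  obtain ⟨z, hz, hzsat⟩ := hex
  refine isAssociatedPrime_iff.mpr ⟨hprime, Ideal.Quotient.mk I (s * z), ?_⟩
  ext r
  rw [Submodule.mem_colon_singleton, Submodule.mem_bot, Algebra.smul_def, Ideal.Quotient.algebraMap_eq,
    ← map_mul, Ideal.Quotient.eq_zero_iff_mem]
  constructor
  · intro hr
    have hrz : r * z ∈ p ^ n1 := by
      have : p ^ n1 = p * p ^ (n1 - 1) := by
        rw [← pow_succ']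
        congr 1
        omega
      rw [this]
      exact Ideal.mul_mem_mul hr hz
    have := hsI _ hrz
    have heq : r * (s * z) = s * (r * z) := by ring
    rw [heq]
    exact this
  · intro hr
    by_contra hrp
    exact hzsat ⟨r, hrp, hr⟩



section pc
variable {ι : Type*} [AddCommGroup ι] [DecidableEq ι]
  {A : Type*} [CommRing A] (𝒜 : ι → AddSubgroup A) [GradedRing 𝒜]
  {L : Type*} [AddCommMonoid L] [LinearOrder L] [IsOrderedCancelAddMonoid L] (φ : ι →+ L)

open scoped Classical in
/-- the sum of the homogeneous components of `a` whose degree maps to `l` under `φ`. -/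
noncomputable def pc (a : A) (l : L) : A :=
  DFinsupp.sumAddHom (fun d => if φ d = l then (𝒜 d).subtype else 0)
    (DirectSum.decompose 𝒜 a)

lemma pc_add (a b : A) (l : L) : pc 𝒜 φ (a + b) l = pc 𝒜 φ a l + pc 𝒜 φ b l := by
  unfold pc
  rw [DirectSum.decompose_add, map_add]

lemma pc_zero (l : L) : pc 𝒜 φ 0 l = 0 := by
  unfold pc
  rw [DirectSum.decompose_zero, map_zero]

lemma pc_sub (a b : A) (l : L) : pc 𝒜 φ (a - b) l = pc 𝒜 φ a l - pc 𝒜 φ b l := by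
  unfold pc
  rw [DirectSum.decompose_sub, map_sub]

lemma pc_sum {β : Type*} (S : Finset β) (f : β → A) (l : L) :
    pc 𝒜 φ (∑ b ∈ S, f b) l = ∑ b ∈ S, pc 𝒜 φ (f b) l := by
  unfold pc
  rw [DirectSum.decompose_sum, map_sum]

lemma pc_of_mem {a : A} {d : ι} (h : a ∈ 𝒜 d) (l : L) :
    pc 𝒜 φ a l = if φ d = l then a else 0 := by
  classical
  unfold pc
  rw [DirectSum.decompose_of_mem 𝒜 h]
  have : (DirectSum.of (fun i => ↥(𝒜 i)) d) ⟨a, h⟩ = DFinsupp.single d ⟨a, h⟩ := rfl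
  rw [this, DFinsupp.sumAddHom_single]
  by_cases hd : φ d = l
  · rw [if_pos hd, if_pos hd]; rfl
  · rw [if_neg hd, if_neg hd]; rfl

lemma pc_spectrum (a : A) :
    ∃ S : Finset L, (∀ l ∉ S, pc 𝒜 φ a l = 0) ∧ ∑ l ∈ S, pc 𝒜 φ a l = a := by
  induction a using DirectSum.Decomposition.inductionOn 𝒜 with
  | zero => exact ⟨∅, fun l _ => pc_zero 𝒜 φ l, by simp⟩
  | homogeneous m =>
    rename_i i
    refine ⟨{φ i}, fun l hl => ?_, ?_⟩
    · rw [pc_of_mem 𝒜 φ m.2, if_neg (by simpa using (Finset.notMem_singleton.mp hl).symm)]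
    · rw [Finset.sum_singleton, pc_of_mem 𝒜 φ m.2, if_pos rfl]
  | add x y hx hy =>
    obtain ⟨Sx, hSx0, hSx⟩ := hx
    obtain ⟨Sy, hSy0, hSy⟩ := hy
    refine ⟨Sx ∪ Sy, fun l hl => ?_, ?_⟩
    · rw [pc_add, hSx0 l (fun h => hl (Finset.mem_union_left _ h)),
        hSy0 l (fun h => hl (Finset.mem_union_right _ h)), add_zero]
    · have h1 : ∑ l ∈ Sx ∪ Sy, pc 𝒜 φ (x + y) l
          = ∑ l ∈ Sx ∪ Sy, pc 𝒜 φ x l + ∑ l ∈ Sx ∪ Sy, pc 𝒜 φ y l := by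
        rw [← Finset.sum_add_distrib]
        exact Finset.sum_congr rfl fun l _ => pc_add 𝒜 φ x y l
      rw [h1, ← Finset.sum_subset Finset.subset_union_left (fun l _ hl => hSx0 l hl),
        ← Finset.sum_subset Finset.subset_union_right (fun l _ hl => hSy0 l hl), hSx, hSy]

lemma pc_sum_of {S : Finset L} {a : A} (hS : ∀ l ∉ S, pc 𝒜 φ a l = 0) :
    ∑ l ∈ S, pc 𝒜 φ a l = a := by
  obtain ⟨S0, hS00, hS0⟩ := pc_spectrum 𝒜 φ a
  rw [Finset.sum_subset (Finset.subset_union_left (s₂ := S0)) (fun l _ hl => hS l hl),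
    ← Finset.sum_subset (Finset.subset_union_right (s₁ := S)) (fun l _ hl => hS00 l hl), hS0]

lemma eq_zero_of_pc {a : A} (h : ∀ l, pc 𝒜 φ a l = 0) : a = 0 := by
  have := pc_sum_of 𝒜 φ (S := ∅) (a := a) (fun l _ => h l)
  simpa using this.symm

lemma pc_pc (a : A) (l l' : L) :
    pc 𝒜 φ (pc 𝒜 φ a l) l' = if l = l' then pc 𝒜 φ a l else 0 := by
  induction a using DirectSum.Decomposition.inductionOn 𝒜 with
  | zero => simp [pc_zero]
  | homogeneous m =>
    rename_i i
    rw [pc_of_mem 𝒜 φ m.2]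
    by_cases h1 : φ i = l
    · rw [if_pos h1, pc_of_mem 𝒜 φ m.2, h1]
    · rw [if_neg h1, pc_zero]
      simp
  | add x y hx hy =>
    rw [pc_add, pc_add, hx, hy]
    by_cases h : l = l'
    · rw [if_pos h, if_pos h, if_pos h, ← pc_add]
    · rw [if_neg h, if_neg h, if_neg h, add_zero]

lemma pc_mul_pc (a : A) : ∀ (b : A) (l1 l2 l : L),
    pc 𝒜 φ (pc 𝒜 φ a l1 * pc 𝒜 φ b l2) l
      = if l1 + l2 = l then pc 𝒜 φ a l1 * pc 𝒜 φ b l2 else 0 := by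
  induction a using DirectSum.Decomposition.inductionOn 𝒜 with
  | zero => intro b l1 l2 l; simp [pc_zero]
  | homogeneous m =>
    rename_i i
    intro b
    induction b using DirectSum.Decomposition.inductionOn 𝒜 with
    | zero => intro l1 l2 l; simp [pc_zero]
    | homogeneous m' =>
      rename_i j
      intro l1 l2 l
      rw [pc_of_mem 𝒜 φ m.2, pc_of_mem 𝒜 φ m'.2]
      by_cases h1 : φ i = l1
      · by_cases h2 : φ j = l2
        · rw [if_pos h1, if_pos h2]
          have hm : ((m : A) * (m' : A)) ∈ 𝒜 (i + j) := SetLike.mul_mem_graded m.2 m'.2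
          rw [pc_of_mem 𝒜 φ hm, map_add, h1, h2]
        · rw [if_neg h2, mul_zero, pc_zero]
          simp
      · rw [if_neg h1, zero_mul, pc_zero]
        simp
    | add x y hx hy =>
      intro l1 l2 l
      rw [pc_add, mul_add, pc_add, hx, hy]
      by_cases h : l1 + l2 = l
      · rw [if_pos h, if_pos h, if_pos h]
      · rw [if_neg h, if_neg h, if_neg h, add_zero]
  | add x y hx hy =>
    intro b l1 l2 l
    rw [pc_add, add_mul, pc_add, hx, hy]
    by_cases h : l1 + l2 = l
    · rw [if_pos h, if_pos h, if_pos h]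
    · rw [if_neg h, if_neg h, if_neg h, add_zero]


lemma pc_top_mul (u v : A) (lu lv : L) (hu : ∀ l, pc 𝒜 φ u l ≠ 0 → l ≤ lu)
    (hv : ∀ l, pc 𝒜 φ v l ≠ 0 → l ≤ lv) :
    pc 𝒜 φ (u * v) (lu + lv) = pc 𝒜 φ u lu * pc 𝒜 φ v lv := by
  classical
  obtain ⟨Su', hSu0', hSu'⟩ := pc_spectrum 𝒜 φ u
  obtain ⟨Sv', hSv0', hSv'⟩ := pc_spectrum 𝒜 φ v
  set Su := insert lu Su' with hSudef
  set Sv := insert lv Sv' with hSvdef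
  have hSu0 : ∀ l ∉ Su, pc 𝒜 φ u l = 0 := fun l hl => hSu0' l (fun h => hl (Finset.mem_insert_of_mem h))
  have hSv0 : ∀ l ∉ Sv, pc 𝒜 φ v l = 0 := fun l hl => hSv0' l (fun h => hl (Finset.mem_insert_of_mem h))
  have hSu : ∑ l ∈ Su, pc 𝒜 φ u l = u := pc_sum_of 𝒜 φ hSu0
  have hSv : ∑ l ∈ Sv, pc 𝒜 φ v l = v := pc_sum_of 𝒜 φ hSv0
  have hexp : u * v = ∑ l1 ∈ Su, ∑ l2 ∈ Sv, pc 𝒜 φ u l1 * pc 𝒜 φ v l2 := by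
    rw [← Finset.sum_mul_sum, hSu, hSv]
  rw [hexp, pc_sum]
  have hterm : ∀ l1 ∈ Su, pc 𝒜 φ (∑ l2 ∈ Sv, pc 𝒜 φ u l1 * pc 𝒜 φ v l2) (lu + lv)
      = if l1 = lu then pc 𝒜 φ u lu * pc 𝒜 φ v lv else 0 := by
    intro l1 _
    rw [pc_sum]
    by_cases h1 : l1 = lu
    · subst h1
      rw [if_pos rfl, Finset.sum_eq_single_of_mem lv (Finset.mem_insert_self _ _)
        (fun l2 _ hne => ?_), pc_mul_pc, if_pos rfl]
      rw [pc_mul_pc]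
      by_cases hz2 : pc 𝒜 φ v l2 = 0
      · simp [hz2]
      · rw [if_neg (fun h => hne (add_left_cancel h))]
    · rw [if_neg h1, Finset.sum_eq_zero]
      intro l2 _
      rw [pc_mul_pc]
      by_cases hz : pc 𝒜 φ u l1 = 0
      · simp [hz]
      by_cases hz2 : pc 𝒜 φ v l2 = 0
      · simp [hz2]
      have h1' : l1 < lu := lt_of_le_of_ne (hu l1 hz) h1
      have h2' : l2 ≤ lv := hv l2 hz2
      rw [if_neg (by intro h; exact absurd h (ne_of_lt (add_lt_add_of_lt_of_le h1' h2')))]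
  rw [Finset.sum_congr rfl hterm, Finset.sum_ite_eq' Su lu, if_pos (Finset.mem_insert_self _ _)]


open scoped Classical in
lemma pc_eq_sum_support (a : A) (l : L) :
    pc 𝒜 φ a l = ∑ d ∈ (DirectSum.decompose 𝒜 a).support.filter (fun d => φ d = l),
      (DirectSum.decompose 𝒜 a d : A) := by
  classical
  unfold pc
  rw [DFinsupp.sumAddHom_apply, DFinsupp.sum, Finset.sum_filter]
  refine Finset.sum_congr rfl fun d _ => ?_
  by_cases h : φ d = l
  · rw [if_pos h, if_pos h]; rfl
  · rw [if_neg h, if_neg h]; rfl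

lemma pc_mem_of_isHomogeneous {I : Ideal A} (hI : I.IsHomogeneous 𝒜) {a : A}
    (ha : a ∈ I) (l : L) : pc 𝒜 φ a l ∈ I := by
  classical
  rw [pc_eq_sum_support]
  exact Ideal.sum_mem I fun d _ => hI d ha

lemma pc_pure_mul_spec (x w : A) (t l : L) (S : Finset L) (hS : ∀ l' ∉ S, pc 𝒜 φ w l' = 0)
    (h : ∀ l' ∈ S, t + l' ≠ l) : pc 𝒜 φ (pc 𝒜 φ x t * w) l = 0 := by
  have hw : w = ∑ l' ∈ S, pc 𝒜 φ w l' := (pc_sum_of 𝒜 φ hS).symm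
  rw [hw, Finset.mul_sum, pc_sum, Finset.sum_eq_zero]
  intro l' hl'
  rw [pc_mul_pc, if_neg (h l' hl')]

lemma key_pow {I : Ideal A} (hI : I.IsHomogeneous 𝒜) (x : A) (t : L)
    (hx : ∀ l, pc 𝒜 φ x l ≠ 0 → l ≤ t) :
    ∀ (n : ℕ) (S : Finset L) (c : A), S.card ≤ n → (∀ l ∉ S, pc 𝒜 φ c l = 0) →
      x * c ∈ I → ∃ k : ℕ, (pc 𝒜 φ x t) ^ k * c ∈ I := by
  intro n
  induction n with
  | zero =>
    intro S c hcard hspec _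
    have hS : S = ∅ := Finset.card_eq_zero.mp (Nat.le_zero.mp hcard)
    have : c = 0 := eq_zero_of_pc 𝒜 φ (fun l => hspec l (by simp [hS]))
    exact ⟨0, by simp [this]⟩
  | succ n IH =>
    intro S c hcard hspec hxc
    rcases S.eq_empty_or_nonempty with hS | hS
    · have : c = 0 := eq_zero_of_pc 𝒜 φ (fun l => hspec l (by simp [hS]))
      exact ⟨0, by simp [this]⟩
    classical
    set s := S.max' hS with hsdef
    have hbddc : ∀ l, pc 𝒜 φ c l ≠ 0 → l ≤ s := by
      intro l hl
      by_contra hls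
      exact hl (hspec l (fun hmem => hls (S.le_max' l hmem)))
    have h1I : pc 𝒜 φ x t * pc 𝒜 φ c s ∈ I := by
      rw [← pc_top_mul 𝒜 φ x c t s hx hbddc]
      exact pc_mem_of_isHomogeneous 𝒜 φ hI hxc _
    set w := c - pc 𝒜 φ c s with hwdef
    have hspecw : ∀ l ∉ S.erase s, pc 𝒜 φ w l = 0 := by
      intro l hl
      rw [hwdef, pc_sub, pc_pc]
      by_cases hls : s = l
      · rw [if_pos hls, hls, sub_self]
      · rw [if_neg hls, sub_zero]
        refine hspec l (fun hmem => hl ?_)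
        exact Finset.mem_erase.mpr ⟨fun h => hls h.symm, hmem⟩
    set c' := pc 𝒜 φ x t * w with hc'def
    have hspec' : ∀ l ∉ (S.erase s).image (t + ·), pc 𝒜 φ c' l = 0 := by
      intro l hl
      refine pc_pure_mul_spec 𝒜 φ x w t l _ hspecw (fun l' hl' h => ?_)
      exact hl (Finset.mem_image.mpr ⟨l', hl', h⟩)
    have hxc' : x * c' ∈ I := by
      have heq : x * c' = pc 𝒜 φ x t * (x * c) - x * (pc 𝒜 φ x t * pc 𝒜 φ c s) := by
        rw [hc'def, hwdef]; ring
      rw [heq]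
      exact I.sub_mem (I.mul_mem_left _ hxc) (I.mul_mem_left _ h1I)
    have hcard' : ((S.erase s).image (t + ·)).card ≤ n := by
      refine le_trans Finset.card_image_le ?_
      rw [Finset.card_erase_of_mem (S.max'_mem hS)]
      omega
    obtain ⟨k, hk⟩ := IH _ _ hcard' hspec' hxc'
    refine ⟨k + 1, ?_⟩
    have heq : pc 𝒜 φ x t ^ (k + 1) * c
        = pc 𝒜 φ x t ^ k * c' + pc 𝒜 φ x t ^ k * (pc 𝒜 φ x t * pc 𝒜 φ c s) := by
      rw [hc'def, hwdef]; ring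
    rw [heq]
    exact I.add_mem hk (I.mul_mem_left _ h1I)

lemma pc_mem_prime {I : Ideal A} (hI : I.IsHomogeneous 𝒜) {𝔭 : Ideal A} (h𝔭 : 𝔭.IsPrime)
    {a : A} (hmem : ∀ r, r ∈ 𝔭 ↔ r * a ∈ I) :
    ∀ x ∈ 𝔭, ∀ l, pc 𝒜 φ x l ∈ 𝔭 := by
  suffices h : ∀ (n : ℕ) (S : Finset L) (x : A), S.card ≤ n → (∀ l ∉ S, pc 𝒜 φ x l = 0) →
      x ∈ 𝔭 → ∀ l, pc 𝒜 φ x l ∈ 𝔭 by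
    intro x hx l
    obtain ⟨S, hS, -⟩ := pc_spectrum 𝒜 φ x
    exact h S.card S x le_rfl hS hx l
  intro n
  induction n with
  | zero =>
    intro S x hcard hspec _ l
    have hS : S = ∅ := Finset.card_eq_zero.mp (Nat.le_zero.mp hcard)
    rw [hspec l (by simp [hS])]
    exact 𝔭.zero_mem
  | succ n IH =>
    intro S x hcard hspec hx l
    rcases S.eq_empty_or_nonempty with hS | hS
    · rw [hspec l (by simp [hS])]
      exact 𝔭.zero_mem
    classical
    set t := S.max' hS with htdef
    have hbdd : ∀ l, pc 𝒜 φ x l ≠ 0 → l ≤ t := by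
      intro l hl
      by_contra hls
      exact hl (hspec l (fun hmem => hls (S.le_max' l hmem)))
    obtain ⟨Sa, hSa, -⟩ := pc_spectrum 𝒜 φ a
    obtain ⟨k, hk⟩ := key_pow 𝒜 φ hI x t hbdd Sa.card Sa a le_rfl hSa ((hmem x).1 hx)
    have hkp : pc 𝒜 φ x t ^ k ∈ 𝔭 := (hmem _).2 hk
    have htop : pc 𝒜 φ x t ∈ 𝔭 := by
      rcases Nat.eq_zero_or_pos k with hk0 | hk0
      · exfalso
        rw [hk0, pow_zero] at hkp
        exact h𝔭.ne_top ((Ideal.eq_top_iff_one 𝔭).mpr hkp)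
      · exact (h𝔭.pow_mem_iff_mem k hk0).mp hkp
    have hx' : x - pc 𝒜 φ x t ∈ 𝔭 := 𝔭.sub_mem hx htop
    have hspec' : ∀ l ∉ S.erase t, pc 𝒜 φ (x - pc 𝒜 φ x t) l = 0 := by
      intro l hl
      rw [pc_sub, pc_pc]
      by_cases hls : t = l
      · rw [if_pos hls, hls, sub_self]
      · rw [if_neg hls, sub_zero]
        refine hspec l (fun hmem => hl (Finset.mem_erase.mpr ⟨fun h => hls h.symm, hmem⟩))
    have hcard' : (S.erase t).card ≤ n := by
      rw [Finset.card_erase_of_mem (S.max'_mem hS)]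
      omega
    have hIH := IH _ _ hcard' hspec' hx'
    have heq : pc 𝒜 φ x l = pc 𝒜 φ (x - pc 𝒜 φ x t) l + pc 𝒜 φ (pc 𝒜 φ x t) l := by
      rw [pc_sub, sub_add_cancel]
    rw [heq]
    refine 𝔭.add_mem (hIH l) ?_
    rw [pc_pc]
    by_cases hls : t = l
    · rw [if_pos hls]; exact htop
    · rw [if_neg hls]; exact 𝔭.zero_mem


lemma decompose_mul_support {x y : A} {d : ι}
    (h : ((DirectSum.decompose 𝒜 (x * y) d : A)) ≠ 0) :
    ∃ d1 d2, ((DirectSum.decompose 𝒜 x d1 : A) ≠ 0) ∧ ((DirectSum.decompose 𝒜 y d2 : A) ≠ 0)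
      ∧ d = d1 + d2 := by
  classical
  by_contra hcon
  push_neg at hcon
  apply h
  have hx := DirectSum.sum_support_decompose 𝒜 x
  have hy := DirectSum.sum_support_decompose 𝒜 y
  have hexp : x * y = ∑ d1 ∈ (DirectSum.decompose 𝒜 x).support,
      ∑ d2 ∈ (DirectSum.decompose 𝒜 y).support,
      (DirectSum.decompose 𝒜 x d1 : A) * (DirectSum.decompose 𝒜 y d2 : A) := by
    rw [← Finset.sum_mul_sum, hx, hy]
  rw [hexp, DirectSum.decompose_sum]
  rw [DFinsupp.finset_sum_apply]
  have : ∀ d1 ∈ (DirectSum.decompose 𝒜 x).support,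
      ((DirectSum.decompose 𝒜 (∑ d2 ∈ (DirectSum.decompose 𝒜 y).support,
        (DirectSum.decompose 𝒜 x d1 : A) * (DirectSum.decompose 𝒜 y d2 : A))) d : A) = 0 := by
    intro d1 hd1
    rw [DirectSum.decompose_sum, DFinsupp.finset_sum_apply]
    have : ∀ d2 ∈ (DirectSum.decompose 𝒜 y).support,
        ((DirectSum.decompose 𝒜 ((DirectSum.decompose 𝒜 x d1 : A)
          * (DirectSum.decompose 𝒜 y d2 : A))) d : A) = 0 := by
      intro d2 hd2
      have hmem : (DirectSum.decompose 𝒜 x d1 : A) * (DirectSum.decompose 𝒜 y d2 : A)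
          ∈ 𝒜 (d1 + d2) := SetLike.mul_mem_graded (SetLike.coe_mem _) (SetLike.coe_mem _)
      have hne : d1 + d2 ≠ d := by
        intro hdd
        refine hcon d1 d2 ?_ ?_ hdd.symm
        · simpa using DFinsupp.mem_support_iff.mp hd1
        · simpa using DFinsupp.mem_support_iff.mp hd2
      rw [DirectSum.decompose_of_mem_ne 𝒜 hmem hne]
    rw [AddSubmonoidClass.coe_finset_sum, Finset.sum_eq_zero this]
  rw [AddSubmonoidClass.coe_finset_sum, Finset.sum_eq_zero this]

lemma pc_homogeneous (K : AddSubgroup ι)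
    (hinj : ∀ d1 ∈ K, ∀ d2 ∈ K, φ d1 = φ d2 → d1 = d2) {y : A}
    (hy : ∀ d, ((DirectSum.decompose 𝒜 y d : A) ≠ 0) → d ∈ K) (l : L) :
    SetLike.IsHomogeneousElem 𝒜 (pc 𝒜 φ y l) := by
  classical
  rw [pc_eq_sum_support]
  set F := (DirectSum.decompose 𝒜 y).support.filter (fun d => φ d = l) with hF
  rcases F.eq_empty_or_nonempty with h | ⟨d, hd⟩
  · rw [h, Finset.sum_empty]
    exact ⟨0, AddSubgroup.zero_mem _⟩
  · have hFd : F = {d} := by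
      apply Finset.eq_singleton_iff_unique_mem.mpr
      refine ⟨hd, fun e he => ?_⟩
      rw [hF, Finset.mem_filter] at hd he
      refine hinj e ?_ d ?_ (he.2.trans hd.2.symm)
      · exact hy e (by simpa using DFinsupp.mem_support_iff.mp he.1)
      · exact hy d (by simpa using DFinsupp.mem_support_iff.mp hd.1)
    rw [hFd, Finset.sum_singleton]
    exact ⟨d, SetLike.coe_mem _⟩

lemma prime_le_of_core_le (K : AddSubgroup ι)
    (hinj : ∀ d1 ∈ K, ∀ d2 ∈ K, φ d1 = φ d2 → d1 = d2)
    (htor : ∀ d : ι, ∃ n : ℕ, 0 < n ∧ n • d ∈ K)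
    {𝔭 q : Ideal A} (h𝔭 : 𝔭.IsPrime) (hq : q.IsPrime)
    (hstab : ∀ x ∈ 𝔭, ∀ l, pc 𝒜 φ x l ∈ 𝔭)
    (hcore : (𝔭.homogeneousCore 𝒜).toIdeal ≤ q) (hle : q ≤ 𝔭) : 𝔭 ≤ q := by
  classical
  let R : Subring A :=
    { carrier := {x | ∀ d, ((DirectSum.decompose 𝒜 x d : A) ≠ 0) → d ∈ K}
      zero_mem' := fun d hd => absurd (by rw [DirectSum.decompose_zero]; rfl) hd
      one_mem' := by
        intro d hd
        by_contra hdK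
        refine hd (DirectSum.decompose_of_mem_ne 𝒜 (SetLike.one_mem_graded 𝒜) ?_)
        intro h
        exact hdK (h ▸ K.zero_mem)
      add_mem' := by
        intro x y hx hy d hd
        rw [DirectSum.decompose_add] at hd
        by_cases h1 : (DirectSum.decompose 𝒜 x d : A) ≠ 0
        · exact hx d h1
        by_cases h2 : (DirectSum.decompose 𝒜 y d : A) ≠ 0
        · exact hy d h2
        push_neg at h1 h2
        exfalso
        apply hd
        rw [DFinsupp.add_apply]
        push_cast
        rw [h1, h2, add_zero]
      neg_mem' := by
        intro x hx d hd
        refine hx d ?_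
        rw [DirectSum.decompose_neg] at hd
        intro h
        apply hd
        rw [DFinsupp.neg_apply]
        push_cast
        rw [h, neg_zero]
      mul_mem' := by
        intro x y hx hy d hd
        obtain ⟨d1, d2, h1, h2, rfl⟩ := decompose_mul_support 𝒜 hd
        exact K.add_mem (hx d1 h1) (hy d2 h2) }
  have hint : ∀ z : A, IsIntegral R z := by
    have hic : ∀ z : A, z ∈ integralClosure R A := by
      intro z
      induction z using DirectSum.Decomposition.inductionOn 𝒜 with
      | zero => exact Subalgebra.zero_mem _
      | homogeneous m =>
        rename_i i
        obtain ⟨n, hn, hnK⟩ := htor i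
        have hpow : ((m : A)) ^ n ∈ R := by
          intro d hd
          by_contra hdK
          refine hd (DirectSum.decompose_of_mem_ne 𝒜 (SetLike.pow_mem_graded n m.2) ?_)
          intro h
          exact hdK (h ▸ hnK)
        refine ⟨Polynomial.X ^ n - Polynomial.C (⟨_, hpow⟩ : R),
          Polynomial.monic_X_pow_sub_C _ (by omega), ?_⟩
        rw [Polynomial.eval₂_sub, Polynomial.eval₂_pow, Polynomial.eval₂_X, Polynomial.eval₂_C]
        have : algebraMap R A ⟨(m : A) ^ n, hpow⟩ = (m : A) ^ n := rfl
        rw [this, sub_self]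
      | add x y hx hy => exact Subalgebra.add_mem _ hx hy
    exact fun z => hic z
  by_contra hne
  obtain ⟨x, hx𝔭, hxq⟩ := SetLike.not_le_iff_exists.mp hne
  have hlt := Ideal.comap_lt_comap_of_integral_mem_sdiff (I := q) (J := 𝔭) (R := R)
    hle ⟨hx𝔭, hxq⟩ (hint x)
  have hge : Ideal.comap (algebraMap R A) 𝔭 ≤ Ideal.comap (algebraMap R A) q := by
    intro y hy
    rw [Ideal.mem_comap] at hy ⊢
    have hyA : (y : A) ∈ 𝔭 := hy
    obtain ⟨S, hS, -⟩ := pc_spectrum 𝒜 φ (y : A)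
    have : (y : A) ∈ q := by
      rw [← pc_sum_of 𝒜 φ hS]
      refine Ideal.sum_mem q fun l _ => ?_
      refine hcore (Ideal.mem_homogeneousCore_of_homogeneous_of_mem ?_ ?_)
      · exact pc_homogeneous 𝒜 φ K hinj y.2 l
      · exact hstab _ hyA l
    exact this
  exact absurd (lt_of_lt_of_le hlt hge) (lt_irrefl _)

end pc


/-- Let `ι` be a finitely generated abelian group, `A` a noetherian commutative ring graded by
`ι`, and `𝔭` a prime ideal of `A`.  Then `𝔭` is an associated prime of `A ⧸ I` for some
homogeneous ideal `I` if and only if `𝔭` is a minimal prime over its homogeneous core `𝔭*`. -/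
theorem isAssociatedPrime_of_homogeneous_iff_minimal_over_homogeneousCore
    {ι : Type*} [AddCommGroup ι] [AddGroup.FG ι] [DecidableEq ι]
    {A : Type*} [CommRing A] [IsNoetherianRing A]
    (𝒜 : ι → AddSubgroup A) [GradedRing 𝒜] (𝔭 : Ideal A) (h𝔭 : 𝔭.IsPrime) :
    (∃ I : Ideal A, I.IsHomogeneous 𝒜 ∧ 𝔭 ∈ associatedPrimes A (A ⧸ I))
      ↔ 𝔭 ∈ ((𝔭.homogeneousCore 𝒜).toIdeal).minimalPrimes := by
  constructor
  · rintro ⟨I, hIhom, hass⟩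
    obtain ⟨-, a', ha⟩ := isAssociatedPrime_iff.mp hass
    obtain ⟨a, rfl⟩ := Ideal.Quotient.mk_surjective a'
    have hmem : ∀ r, r ∈ 𝔭 ↔ r * a ∈ I := by
      intro r
      rw [ha, Submodule.mem_colon_singleton, Submodule.mem_bot, Algebra.smul_def,
        Ideal.Quotient.algebraMap_eq, ← map_mul, Ideal.Quotient.eq_zero_iff_mem]
    -- group-theoretic data
    obtain ⟨n, κ, fκ, pr, hpr, ex, ⟨e⟩⟩ := AddCommGroup.equiv_free_prod_directSum_zmod ι
    let L := Lex (Fin n →₀ ℤ)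
    let φ : ι →+ L := AddMonoidHom.mk' (fun d => toLex (e d).1) (fun a b => by simp [map_add])
    let K : AddSubgroup ι := AddSubgroup.comap e.toAddMonoidHom
      ((⊤ : AddSubgroup (Fin n →₀ ℤ)).prod ⊥)
    have hinj : ∀ d1 ∈ K, ∀ d2 ∈ K, φ d1 = φ d2 → d1 = d2 := by
      intro d1 h1 d2 h2 hφ
      have h1' : (e d1).2 = 0 := h1.2
      have h2' : (e d2).2 = 0 := h2.2
      have hfst : (e d1).1 = (e d2).1 := by simpa [φ] using hφ
      exact e.injective (Prod.ext hfst (h1'.trans h2'.symm))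
    have htor0 : ∀ t : DirectSum κ fun i => ZMod (pr i ^ ex i), ∃ N : ℕ, 0 < N ∧ N • t = 0 := by
      intro t
      classical
      induction t using DFinsupp.induction with
      | h0 => exact ⟨1, one_pos, smul_zero 1⟩
      | ha i x f h1 h2 ih =>
        obtain ⟨N, hN, hNf⟩ := ih
        refine ⟨N * (pr i ^ ex i), ?_, ?_⟩
        · have := (hpr i).pos
          positivity
        · rw [smul_add]
          have hx : (pr i ^ ex i : ℕ) • (DFinsupp.single i x : DirectSum κ fun j => ZMod (pr j ^ ex j)) = 0 := by
            ext j
            rw [DFinsupp.smul_apply, DFinsupp.zero_apply]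
            rcases eq_or_ne j i with rfl | hj
            · rw [DFinsupp.single_eq_same]
              simp [nsmul_eq_mul, ZMod.natCast_self]
            · rw [DFinsupp.single_eq_of_ne hj, smul_zero]
          have h1 : (N * pr i ^ ex i) • (DFinsupp.single i x : DirectSum κ fun j => ZMod (pr j ^ ex j)) = 0 := by
            rw [mul_smul, hx, smul_zero]
          have h2 : (N * pr i ^ ex i) • f = 0 := by
            rw [mul_comm, mul_smul, hNf, smul_zero]
          rw [h1, h2, add_zero]
    have htor : ∀ d : ι, ∃ N : ℕ, 0 < N ∧ N • d ∈ K := by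
      intro d
      obtain ⟨N, hN, hNt⟩ := htor0 (e d).2
      refine ⟨N, hN, ?_, ?_⟩
      · trivial
      · show (e (N • d)).2 = 0
        rw [map_nsmul]
        exact hNt
    have hstab := pc_mem_prime 𝒜 φ hIhom h𝔭 hmem
    refine ⟨⟨h𝔭, Ideal.toIdeal_homogeneousCore_le 𝒜 𝔭⟩, ?_⟩
    rintro q ⟨hq, hcoreq⟩ hq𝔭
    exact prime_le_of_core_le 𝒜 φ K hinj htor h𝔭 hq hstab hcoreq hq𝔭
  · intro hmin
    exact ⟨(𝔭.homogeneousCore 𝒜).toIdeal, (𝔭.homogeneousCore 𝒜).isHomogeneous,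
      aux_minimalPrimes_mem_associatedPrimes hmin⟩
end

section
/- Let n be a natural number and A a noetherian commutative ring graded by ℤⁿ (i.e., by ι = Fin n → ℤ). Then: (i) for every prime ideal 𝔭 of A, the homogeneous core 𝔭* is a prime ideal; and (ii) for every homogeneous ideal I of A, every associated prime of the A-module A⧸I is a homogeneous ideal. -/
open DirectSum Finset

open scoped Classical in
/-- Key lemma: over a grading by a linearly ordered cancellative monoid, if `I` is a
homogeneous ideal, `𝔭` a prime with `𝔭 = (I : y)`, then all homogeneous components of
elements of `𝔭` lie in `𝔭`.  Induction on the number of components of `y` outside `I`. -/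
theorem aux_key {ι σ A : Type*} [CommRing A] [AddCancelCommMonoid ι] [LinearOrder ι]
    [IsOrderedCancelAddMonoid ι]
    [DecidableEq ι] [SetLike σ A] [AddSubmonoidClass σ A] (𝒜 : ι → σ) [GradedRing 𝒜]
    {I 𝔭 : Ideal A} (hI : I.IsHomogeneous 𝒜) (hp : 𝔭.IsPrime) :
    ∀ (k : ℕ) (y : A), (∀ c : A, c ∈ 𝔭 ↔ c * y ∈ I) →
      ((DFinsupp.support (decompose 𝒜 y)).filter
        (fun j => (decompose 𝒜 y j : A) ∉ I)).card ≤ k →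
      ∀ a ∈ 𝔭, ∀ i, (decompose 𝒜 a i : A) ∈ 𝔭 := by
  intro k
  induction k with
  | zero =>
    intro y hy hcard a ha i
    exfalso
    have hyI : y ∈ I := by
      rw [← DirectSum.sum_support_decompose 𝒜 y]
      refine Ideal.sum_mem _ fun j hj => ?_
      by_contra hj'
      have hmem : j ∈ (DFinsupp.support (decompose 𝒜 y)).filter
          (fun j => (decompose 𝒜 y j : A) ∉ I) := Finset.mem_filter.2 ⟨hj, hj'⟩
      rw [Finset.card_eq_zero.1 (Nat.le_zero.1 hcard)] at hmem
      exact Finset.notMem_empty _ hmem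
    exact hp.ne_top ((Ideal.eq_top_iff_one _).2 ((hy 1).2 (by simpa using hyI)))
  | succ k ih =>
    intro y hy hcard a ha i
    set T := (DFinsupp.support (decompose 𝒜 y)).filter
        (fun j => (decompose 𝒜 y j : A) ∉ I) with hTdef
    by_cases hTne : T.Nonempty
    swap
    · exfalso
      have hyI : y ∈ I := by
        rw [← DirectSum.sum_support_decompose 𝒜 y]
        refine Ideal.sum_mem _ fun j hj => ?_
        by_contra hj'
        exact hTne ⟨j, Finset.mem_filter.2 ⟨hj, hj'⟩⟩
      exact hp.ne_top ((Ideal.eq_top_iff_one _).2 ((hy 1).2 (by simpa using hyI)))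
    set my := T.min' hTne with hmydef
    have hmyT : my ∈ T := T.min'_mem hTne
    have hmy_not : (decompose 𝒜 y my : A) ∉ I := (Finset.mem_filter.1 hmyT).2
    have hmy_supp : my ∈ DFinsupp.support (decompose 𝒜 y) := (Finset.mem_filter.1 hmyT).1
    have hlow : ∀ j, j < my → (decompose 𝒜 y j : A) ∈ I := by
      intro j hj
      by_contra hj'
      by_cases hjs : j ∈ DFinsupp.support (decompose 𝒜 y)
      · exact absurd (T.min'_le j (Finset.mem_filter.2 ⟨hjs, hj'⟩)) (not_le.2 hj)
      · exact hj' (by rw [DFinsupp.notMem_support_iff.1 hjs]; simpa using I.zero_mem)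
    -- main claim : for a' ∈ 𝔭 with nonempty support, either the lowest component of a'
    -- is in 𝔭, or (jumping to a better y) the whole conclusion holds.
    have claim : ∀ a' : A, a' ∈ 𝔭 → ∀ hne : (DFinsupp.support (decompose 𝒜 a')).Nonempty,
        ((decompose 𝒜 a' ((DFinsupp.support (decompose 𝒜 a')).min' hne) : A) ∈ 𝔭) ∨
        (∀ b ∈ 𝔭, ∀ j, (decompose 𝒜 b j : A) ∈ 𝔭) := by
      intro a' ha' hne
      set m := (DFinsupp.support (decompose 𝒜 a')).min' hne with hmdef
      set am : A := (decompose 𝒜 a' m : A) with hamdef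
      have ham : am ∈ 𝒜 m := SetLike.coe_mem _
      have stepA : am * (decompose 𝒜 y my : A) ∈ I := by
        set antidiag := ((DFinsupp.support (decompose 𝒜 a')) ×ˢ
            (DFinsupp.support (decompose 𝒜 y))).filter
            (fun ij => ij.1 + ij.2 = m + my) with hant
        have hmm : (m, my) ∈ antidiag :=
          Finset.mem_filter.2 ⟨Finset.mem_product.2
            ⟨(DFinsupp.support (decompose 𝒜 a')).min'_mem hne, hmy_supp⟩, rfl⟩
        have hsum : (decompose 𝒜 (a' * y) (m + my) : A) =
            ∑ ij ∈ antidiag, (decompose 𝒜 a' ij.1 : A) * (decompose 𝒜 y ij.2 : A) := by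
          rw [DirectSum.decompose_mul, DirectSum.coe_mul_apply]
        have hIay : (decompose 𝒜 (a' * y) (m + my) : A) ∈ I := hI _ ((hy a').1 ha')
        have hsplit : am * (decompose 𝒜 y my : A) =
            (decompose 𝒜 (a' * y) (m + my) : A) -
            ∑ ij ∈ antidiag.erase (m, my),
              (decompose 𝒜 a' ij.1 : A) * (decompose 𝒜 y ij.2 : A) := by
          rw [hsum, ← Finset.add_sum_erase _ _ hmm]
          ring
        rw [hsplit]
        refine Ideal.sub_mem _ hIay (Ideal.sum_mem _ fun ij hij => ?_)
        obtain ⟨hij1, hij2⟩ := Finset.mem_erase.1 hij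
        obtain ⟨hprod, hadd⟩ := Finset.mem_filter.1 hij2
        obtain ⟨hi1, hi2⟩ := Finset.mem_product.1 hprod
        have h1 : m ≤ ij.1 := Finset.min'_le _ _ hi1
        have h2 : ij.2 ≤ my := by
          have h3 : m + ij.2 ≤ ij.1 + ij.2 := add_le_add_left h1 _
          rw [hadd] at h3
          exact le_of_add_le_add_left h3
        have h3 : ij.2 < my := by
          refine lt_of_le_of_ne h2 fun h => hij1 ?_
          have : ij.1 = m := by
            have := hadd
            rw [h] at this
            exact add_right_cancel this
          exact Prod.ext this h
        exact Ideal.mul_mem_left _ _ (hlow _ h3)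
      by_cases hc : am ∈ 𝔭
      · exact Or.inl hc
      · right
        set y' := am * y with hy'def
        have hy' : ∀ c : A, c ∈ 𝔭 ↔ c * y' ∈ I := by
          intro c
          constructor
          · intro hc'
            have h4 : c * y ∈ I := (hy c).1 hc'
            have h5 : c * y' = am * (c * y) := by rw [hy'def]; ring
            rw [h5]
            exact Ideal.mul_mem_left _ _ h4
          · intro hcy'
            have h4 : (c * am) * y ∈ I := by
              rw [mul_assoc]
              exact hcy'
            rcases hp.mem_or_mem ((hy _).2 h4) with h | h
            exacts [h, absurd h hc]
        have hcomp : ∀ d, d ∉ (T.erase my).image (fun j => m + j) →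
            (decompose 𝒜 y' d : A) ∈ I := by
          intro d hd
          have hy'eq : y' = ∑ j ∈ DFinsupp.support (decompose 𝒜 y),
              am * (decompose 𝒜 y j : A) := by
            rw [hy'def, ← Finset.mul_sum, DirectSum.sum_support_decompose]
          have hproj : (decompose 𝒜 y' d : A) =
              ∑ j ∈ DFinsupp.support (decompose 𝒜 y),
                (decompose 𝒜 (am * (decompose 𝒜 y j : A)) d : A) := by
            conv_lhs => rw [hy'eq]
            rw [← GradedRing.proj_apply, map_sum]
            simp_rw [GradedRing.proj_apply]
          rw [hproj]
          refine Ideal.sum_mem _ fun j hj => ?_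
          by_cases hdj : m + j = d
          · subst hdj
            rw [DirectSum.coe_decompose_mul_add_of_left_mem 𝒜 ham,
              DirectSum.decompose_coe, DirectSum.of_eq_same]
            have hjT : j = my ∨ j ∉ T := by
              by_contra h
              push_neg at h
              exact hd (Finset.mem_image.2 ⟨j, Finset.mem_erase.2 ⟨h.1, h.2⟩, rfl⟩)
            rcases hjT with rfl | hjT
            · exact stepA
            · have : (decompose 𝒜 y j : A) ∈ I := by
                by_contra h
                exact hjT (Finset.mem_filter.2 ⟨hj, h⟩)
              exact Ideal.mul_mem_left _ _ this
          · rw [DirectSum.decompose_of_mem_ne 𝒜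
              (SetLike.mul_mem_graded ham (SetLike.coe_mem _)) hdj]
            exact I.zero_mem
        have hcard' : ((DFinsupp.support (decompose 𝒜 y')).filter
            (fun j => (decompose 𝒜 y' j : A) ∉ I)).card ≤ k := by
          have hsub : (DFinsupp.support (decompose 𝒜 y')).filter
              (fun j => (decompose 𝒜 y' j : A) ∉ I) ⊆
              (T.erase my).image (fun j => m + j) := by
            intro d hd
            obtain ⟨_, hd2⟩ := Finset.mem_filter.1 hd
            by_contra h
            exact hd2 (hcomp d h)
          calc ((DFinsupp.support (decompose 𝒜 y')).filter
                (fun j => (decompose 𝒜 y' j : A) ∉ I)).card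
              ≤ ((T.erase my).image (fun j => m + j)).card := Finset.card_le_card hsub
            _ ≤ (T.erase my).card := Finset.card_image_le
            _ = T.card - 1 := Finset.card_erase_of_mem hmyT
            _ ≤ k := by omega
        exact fun b hb j => ih y' hy' hcard' b hb j
    -- inner induction on the number of components of `b`
    have inner : ∀ s (b : A), (DFinsupp.support (decompose 𝒜 b)).card ≤ s → b ∈ 𝔭 →
        ∀ j, (decompose 𝒜 b j : A) ∈ 𝔭 := by
      intro s
      induction s with
      | zero =>
        intro b hbcard hb j
        have h0 : DFinsupp.support (decompose 𝒜 b) = ∅ :=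
          Finset.card_eq_zero.1 (Nat.le_zero.1 hbcard)
        have : decompose 𝒜 b j = 0 :=
          DFinsupp.notMem_support_iff.1 (by rw [h0]; exact Finset.notMem_empty _)
        rw [this]
        simpa using 𝔭.zero_mem
      | succ s ihs =>
        intro b hbcard hb j
        by_cases hne : (DFinsupp.support (decompose 𝒜 b)).Nonempty
        · rcases claim b hb hne with hm𝔭 | hall
          · set m := (DFinsupp.support (decompose 𝒜 b)).min' hne with hmdef
            set bm : A := (decompose 𝒜 b m : A) with hbmdef
            have hbm : bm ∈ 𝒜 m := SetLike.coe_mem _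
            by_cases hjm : j = m
            · rw [hjm]; exact hm𝔭
            · have hb' : b - bm ∈ 𝔭 := 𝔭.sub_mem hb hm𝔭
              have hproj_sub : ∀ d, (decompose 𝒜 (b - bm) d : A) =
                  (decompose 𝒜 b d : A) - (decompose 𝒜 bm d : A) := by
                intro d
                rw [← GradedRing.proj_apply, ← GradedRing.proj_apply, ← GradedRing.proj_apply,
                  map_sub]
              have hsupp' : DFinsupp.support (decompose 𝒜 (b - bm)) ⊆
                  (DFinsupp.support (decompose 𝒜 b)).erase m := by
                intro d hd
                have hd' : (decompose 𝒜 (b - bm) d : A) ≠ 0 := by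
                  intro h
                  exact DFinsupp.mem_support_iff.1 hd (Subtype.ext h)
                rw [Finset.mem_erase]
                constructor
                · intro hdm
                  apply hd'
                  rw [hproj_sub, hdm, DirectSum.decompose_of_mem_same 𝒜 hbm, sub_self]
                · by_contra hds
                  apply hd'
                  rw [hproj_sub]
                  have h1 : (decompose 𝒜 b d : A) = 0 := by
                    rw [DFinsupp.notMem_support_iff.1 hds]; rfl
                  have h2 : (decompose 𝒜 bm d : A) = 0 := by
                    by_cases hdm : d = m
                    · rw [hdm, DirectSum.decompose_of_mem_same 𝒜 hbm]
                      rw [hdm] at h1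
                      exact h1
                    · exact DirectSum.decompose_of_mem_ne 𝒜 hbm (Ne.symm hdm)
                  rw [h1, h2, sub_zero]
              have hcard'' : (DFinsupp.support (decompose 𝒜 (b - bm))).card ≤ s := by
                have h1 : ((DFinsupp.support (decompose 𝒜 b)).erase m).card =
                    (DFinsupp.support (decompose 𝒜 b)).card - 1 :=
                  Finset.card_erase_of_mem ((DFinsupp.support (decompose 𝒜 b)).min'_mem hne)
                have h2 := Finset.card_le_card hsupp'
                omega
              have hfin := ihs (b - bm) hcard'' hb' j
              have : (decompose 𝒜 (b - bm) j : A) = (decompose 𝒜 b j : A) := by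
                rw [hproj_sub, DirectSum.decompose_of_mem_ne 𝒜 hbm (Ne.symm hjm), sub_zero]
              rwa [this] at hfin
          · exact hall b hb j
        · have : decompose 𝒜 b j = 0 := DFinsupp.notMem_support_iff.1
            (fun h => hne ⟨j, h⟩)
          rw [this]
          simpa using 𝔭.zero_mem
    exact inner _ a le_rfl ha i

/-- Let `A` be a noetherian commutative ring graded by `ℤⁿ` (the free abelian group
`Fin n → ℤ`).  Then (i) for every prime ideal `𝔭` of `A`, the homogeneous core `𝔭*` is prime;
and (ii) for every homogeneous ideal `I`, every associated prime of `A ⧸ I` is homogeneous. -/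
theorem homogeneousCore_isPrime_and_associatedPrimes_homogeneous
    (n : ℕ) {A : Type*} [CommRing A] [IsNoetherianRing A]
    (𝒜 : (Fin n → ℤ) → AddSubgroup A) [GradedRing 𝒜] :
    (∀ 𝔭 : Ideal A, 𝔭.IsPrime → ((𝔭.homogeneousCore 𝒜).toIdeal).IsPrime) ∧
    (∀ I : Ideal A, I.IsHomogeneous 𝒜 →
      ∀ 𝔭 ∈ associatedPrimes A (A ⧸ I), 𝔭.IsHomogeneous 𝒜) := by
  letI lo1 : LinearOrder (Lex (Fin n → ℤ)) := inferInstance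
  letI lo : LinearOrder (Lex (Fin n → ℤ)) :=
    { lo1 with
      toDecidableEq := inferInstanceAs (DecidableEq (Fin n → ℤ))
      compare_eq_compareOfLessAndEq := fun a b => by
        rw [lo1.compare_eq_compareOfLessAndEq a b]
        unfold compareOfLessAndEq
        split_ifs <;> rfl }
  letI lo0 : IsOrderedCancelAddMonoid (Lex (Fin n → ℤ)) := inferInstance
  let ℬ : Lex (Fin n → ℤ) → AddSubgroup A := fun i => 𝒜 (ofLex i)
  letI hgb : GradedRing ℬ := ‹GradedRing 𝒜›
  constructor
  · intro 𝔭 h𝔭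
    exact (@Ideal.IsPrime.homogeneousCore _ _ _ _ _ _ _ _ _ ℬ hgb _ h𝔭 : _)
  · intro I hI 𝔭 h𝔭
    obtain ⟨hp, x, hx⟩ := (isAssociatedPrime_iff).1 h𝔭
    obtain ⟨y, rfl⟩ := Ideal.Quotient.mk_surjective x
    have hy : ∀ c : A, c ∈ 𝔭 ↔ c * y ∈ I := by
      intro c
      rw [hx, Submodule.mem_colon_singleton, Submodule.mem_bot, ← Ideal.Quotient.eq_zero_iff_mem
        (I := I) (a := c * y)]
      constructor
      · intro h
        rw [← h]
        rfl
      · intro h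
        rw [← h]
        rfl
    have hIb : Ideal.IsHomogeneous ℬ I := hI
    have hkey := aux_key ℬ hIb hp _ y hy le_rfl
    exact fun i a ha => hkey a ha i
end
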